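/- Let 𝕏 be a finite edge-trivial graph of groups with n vertices, m edges, and l legs. Then ζ(u,𝕏)^{-1} = (1-u^2)^{b_1(X)-1} (1+u)^l det(I_n - CAu + (CQ - I_n)u^2), where b_1(X) = m - n + 1. -/
import Mathlib


open Polynomial

structure LegGraph where
  V : Type
  H : Type
  [fV : Fintype V]
  [fH : Fintype H]
  [dV : DecidableEq V]
  [dH : DecidableEq H]
  r : H → V
  bar : H → H
  bar_bar : ∀ h, bar (bar h) = h

attribute [instance] LegGraph.fV LegGraph.fH LegGraph.dV LegGraph.dH

namespace LegGraph

/-- number of legs (half-edges fixed by the involution) -/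
def numLegs (X : LegGraph) : ℕ := Fintype.card {h : X.H // X.bar h = h}

/-- number of edges: `card H = 2m + l`, so `m = (card H - l)/2` -/
def numEdges (X : LegGraph) : ℕ := (Fintype.card X.H - X.numLegs) / 2

/-- the adjacency matrix of a graph with legs:
`A_{uv} = #{half-edges h : r(h) = u, r(h̄) = v}` -/
def adjMat (X : LegGraph) : Matrix X.V X.V ℤ := fun u v =>
  (Fintype.card {h : X.H // X.r h = u ∧ X.r (X.bar h) = v} : ℤ)

/-- the diagonal valency matrix -/
def valMat (X : LegGraph) : Matrix X.V X.V ℤ :=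
  Matrix.diagonal fun v => (Fintype.card {h : X.H // X.r h = v} : ℤ)

end LegGraph

/-- A finite edge-trivial graph of groups. -/
structure GraphOfGroups where
  X : LegGraph
  Gp : X.V → Type
  [grp : ∀ v, Group (Gp v)]
  [fin : ∀ v, Fintype (Gp v)]

attribute [instance] GraphOfGroups.grp GraphOfGroups.fin

namespace GraphOfGroups

/-- The charge of a vertex: the order of its vertex group. -/
def charge (𝕏 : GraphOfGroups) (v : 𝕏.X.V) : ℕ := Fintype.card (𝕏.Gp v)

/-- The half-edge adjacency matrix `W` of an edge-trivial graph of groups. -/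
def Wmat (𝕏 : GraphOfGroups) : Matrix 𝕏.X.H 𝕏.X.H ℤ := fun h h' =>
  if h' = 𝕏.X.bar h then (𝕏.charge (𝕏.X.r h') : ℤ) - 1
  else if 𝕏.X.r (𝕏.X.bar h) = 𝕏.X.r h' then (𝕏.charge (𝕏.X.r h') : ℤ) else 0

/-- The diagonal charge matrix. -/
def chargeMat (𝕏 : GraphOfGroups) : Matrix 𝕏.X.V 𝕏.X.V ℤ :=
  Matrix.diagonal fun v => (𝕏.charge v : ℤ)

end GraphOfGroups

noncomputable section GogInv

variable {H : Type} [Fintype H] [DecidableEq H]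

def gogIx (h : H) : ℕ := Fintype.equivFin H h

lemma gogIx_inj : Function.Injective (gogIx (H := H)) :=
  fun a b hab => (Fintype.equivFin H).injective (Fin.ext hab)

variable (bar : H → H)

abbrev gogLeg := {h : H // bar h = h}
abbrev gogPos := {h : H // gogIx h < gogIx (bar h)}

def gogF : gogLeg bar ⊕ Fin 2 × gogPos bar → H
  | .inl x => x.1
  | .inr (i, p) => if i = 0 then p.1 else bar p.1

variable (hb : ∀ h, bar (bar h) = h)
include hb

lemma gogPos_ne (p : gogPos bar) : p.1 ≠ bar p.1 := by
  intro h
  have := p.2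
  rw [← h] at this
  exact lt_irrefl _ this

lemma gogPos_bar_ne (p q : gogPos bar) : bar p.1 ≠ q.1 := by
  intro h
  have h1 := p.2
  have h2 := q.2
  rw [← h, hb] at h2
  exact lt_asymm h1 h2

lemma gogLeg_ne_pos (x : gogLeg bar) (p : gogPos bar) : p.1 ≠ x.1 := by
  intro h
  exact gogPos_ne bar hb p (by rw [h, x.2])

lemma gogLeg_ne_pos' (x : gogLeg bar) (p : gogPos bar) : bar p.1 ≠ x.1 := by
  intro h
  have : bar (bar p.1) = bar p.1 := by rw [h, x.2, ← h]
  rw [hb] at this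
  exact gogPos_ne bar hb p this

lemma gogF_inj : Function.Injective (gogF bar) := by
  rintro (x | ⟨i, p⟩) (y | ⟨j, q⟩) hxy
  · exact congrArg Sum.inl (Subtype.ext hxy)
  · exfalso
    fin_cases j <;> simp [gogF] at hxy
    · exact gogLeg_ne_pos bar hb x q hxy.symm
    · exact gogLeg_ne_pos' bar hb x q hxy.symm
  · exfalso
    fin_cases i <;> simp [gogF] at hxy
    · exact gogLeg_ne_pos bar hb y p hxy
    · exact gogLeg_ne_pos' bar hb y p hxy
  · fin_cases i <;> fin_cases j <;> simp [gogF] at hxy ⊢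
    · exact Subtype.ext hxy
    · exact absurd hxy.symm (gogPos_bar_ne bar hb q p)
    · exact absurd hxy (gogPos_bar_ne bar hb p q)
    · exact Subtype.ext (by rw [← hb p.1, hxy, hb])

lemma gogF_surj : Function.Surjective (gogF bar) := by
  intro h
  by_cases hl : bar h = h
  · exact ⟨.inl ⟨h, hl⟩, rfl⟩
  have hne : gogIx h ≠ gogIx (bar h) := fun hc => hl (gogIx_inj hc).symm
  rcases hne.lt_or_gt with hlt | hgt
  · exact ⟨.inr (0, ⟨h, hlt⟩), by simp [gogF]⟩
  · refine ⟨.inr (1, ⟨bar h, ?_⟩), by simp [gogF, hb]⟩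
    rw [hb]; exact hgt

lemma gog_card :
    Fintype.card H = Fintype.card (gogLeg bar) + 2 * Fintype.card (gogPos bar) := by
  rw [← Fintype.card_congr (Equiv.ofBijective _ ⟨gogF_inj bar hb, gogF_surj bar hb⟩)]
  simp [Fintype.card_sum, Fintype.card_prod]



variable {K : Type} [CommRing K]

def gogJ : Matrix H H K := Matrix.of fun h h' => if h' = bar h then 1 else 0

def gogB : Matrix (gogLeg bar ⊕ Fin 2 × gogPos bar) (gogLeg bar ⊕ Fin 2 × gogPos bar) K :=
  Matrix.fromBlocks 1 0 0 (Matrix.blockDiagonal fun _ : gogPos bar => !![(0:K),1;1,0])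

lemma gogJB (a b : gogLeg bar ⊕ Fin 2 × gogPos bar) :
    gogJ bar (K := K) (gogF bar a) (gogF bar b) = gogB bar a b := by
  rcases a with x | ⟨i, p⟩ <;> rcases b with y | ⟨j, q⟩
  · simp only [gogJ, gogF, gogB, Matrix.of_apply, Matrix.fromBlocks_apply₁₁, Matrix.one_apply,
      x.2]
    by_cases hxy : x = y
    · simp [hxy]
    · rw [if_neg fun hc => hxy (Subtype.ext hc.symm), if_neg hxy]
  · simp only [gogJ, gogF, gogB, Matrix.of_apply, Matrix.fromBlocks_apply₁₂, Matrix.zero_apply]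
    rw [x.2, if_neg]
    fin_cases j <;> simp
    · exact gogLeg_ne_pos bar hb x q
    · exact gogLeg_ne_pos' bar hb x q
  · simp only [gogJ, gogF, gogB, Matrix.of_apply, Matrix.fromBlocks_apply₂₁, Matrix.zero_apply]
    rw [if_neg]
    fin_cases i <;> simp
    · intro hc; exact gogLeg_ne_pos' bar hb y p hc.symm
    · rw [hb]; intro hc; exact gogLeg_ne_pos bar hb y p hc.symm
  · simp only [gogJ, gogF, gogB, Matrix.of_apply, Matrix.fromBlocks_apply₂₂,
      Matrix.blockDiagonal_apply]
    fin_cases i <;> fin_cases j <;> simp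
    · intro hc; exact absurd hc.symm (gogPos_bar_ne bar hb p q)
    · by_cases hpq : p = q
      · simp [hpq]
      · rw [if_neg fun hc => hpq (Subtype.ext (by rw [← hb p.1, ← hc, hb])), if_neg hpq]
    · rw [hb]
      by_cases hpq : p = q
      · simp [hpq]
      · rw [if_neg fun hc => hpq (Subtype.ext hc.symm), if_neg hpq]
    · rw [hb]; intro hc; exact absurd hc (gogPos_bar_ne bar hb q p)

lemma gog_det_J (u : K) :
    Matrix.det (1 + u • gogJ bar (K := K)) =
      (1 + u) ^ Fintype.card (gogLeg bar) * (1 - u ^ 2) ^ Fintype.card (gogPos bar) := by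
  classical
  set e : (gogLeg bar ⊕ Fin 2 × gogPos bar) ≃ H :=
    Equiv.ofBijective _ ⟨gogF_inj bar hb, gogF_surj bar hb⟩ with he
  have hfa : ∀ a, e a = gogF bar a := fun a => rfl
  have hsub : (1 + u • gogJ bar (K := K)) =
      ((1 : Matrix _ _ K) + u • gogB bar).submatrix e.symm e.symm := by
    ext h h'
    obtain ⟨a, rfl⟩ := gogF_surj bar hb h
    obtain ⟨b, rfl⟩ := gogF_surj bar hb h'
    have ha : e.symm (gogF bar a) = a := by rw [← hfa, Equiv.symm_apply_apply]
    have hbq : e.symm (gogF bar b) = b := by rw [← hfa, Equiv.symm_apply_apply]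
    have hone : (1 : Matrix H H K) (gogF bar a) (gogF bar b) = (1 : Matrix _ _ K) a b := by
      simp [Matrix.one_apply, (gogF_inj bar hb).eq_iff]
    simp only [Matrix.submatrix_apply, ha, hbq, Matrix.add_apply, Matrix.smul_apply, hone,
      gogJB bar hb a b]
  rw [hsub, Matrix.det_submatrix_equiv_self]
  have hblocks : (1 : Matrix _ _ K) + u • gogB bar =
      Matrix.fromBlocks ((1 : Matrix (gogLeg bar) (gogLeg bar) K) + u • 1) 0 0
        ((1 : Matrix (Fin 2 × gogPos bar) (Fin 2 × gogPos bar) K) +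
          u • Matrix.blockDiagonal fun _ : gogPos bar => !![(0:K),1;1,0]) := by
    rw [gogB, ← Matrix.fromBlocks_one, Matrix.fromBlocks_smul, Matrix.fromBlocks_add]
    simp
  rw [hblocks, Matrix.det_fromBlocks_zero₂₁]
  have h1 : (1 : Matrix (gogLeg bar) (gogLeg bar) K) + u • 1 = (1 + u) • 1 := by
    rw [add_smul, one_smul]
  have h2 : (1 : Matrix (Fin 2 × gogPos bar) (Fin 2 × gogPos bar) K) +
      u • Matrix.blockDiagonal (fun _ : gogPos bar => !![(0:K),1;1,0]) =
      Matrix.blockDiagonal fun _ : gogPos bar => !![(1:K), u; u, 1] := by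
    rw [← Matrix.blockDiagonal_smul, ← Matrix.blockDiagonal_one, ← Matrix.blockDiagonal_add]
    refine congrArg Matrix.blockDiagonal (funext fun p => ?_)
    show (1 : Matrix (Fin 2) (Fin 2) K) + u • !![(0:K),1;1,0] = !![(1:K), u; u, 1]
    ext i j
    fin_cases i <;> fin_cases j <;> simp [Matrix.one_apply]
  rw [h1, h2, Matrix.det_smul, Matrix.det_one, mul_one, Matrix.det_blockDiagonal]
  simp [Matrix.det_fin_two_of]
  ring


end GogInv

namespace GogProof
noncomputable section
set_option synthInstance.maxHeartbeats 1000000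
set_option maxHeartbeats 1000000

open Matrix

abbrev Kk : Type := FractionRing (Polynomial ℤ)

def uu : Kk := algebraMap (Polynomial ℤ) Kk X

variable (𝕏 : GraphOfGroups)

def Sm : Matrix 𝕏.X.V 𝕏.X.H Kk := Matrix.of fun v h => if 𝕏.X.r h = v then 1 else 0
def Em : Matrix 𝕏.X.H 𝕏.X.V Kk := Matrix.of fun h v => if 𝕏.X.r (𝕏.X.bar h) = v then 1 else 0
def Jm : Matrix 𝕏.X.H 𝕏.X.H Kk := Matrix.of fun h h' => if h' = 𝕏.X.bar h then 1 else 0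
def Cm : Matrix 𝕏.X.V 𝕏.X.V Kk := Matrix.diagonal fun v => (𝕏.charge v : Kk)
def WK : Matrix 𝕏.X.H 𝕏.X.H Kk := 𝕏.Wmat.map Int.cast
def AK : Matrix 𝕏.X.V 𝕏.X.V Kk := 𝕏.X.adjMat.map Int.cast
def QK : Matrix 𝕏.X.V 𝕏.X.V Kk := 𝕏.X.valMat.map Int.cast

lemma JJ : Jm 𝕏 * Jm 𝕏 = 1 := by
  ext h h'
  rw [Matrix.mul_apply, Finset.sum_eq_single (𝕏.X.bar h)]
  · simp [Jm, Matrix.one_apply, 𝕏.X.bar_bar, eq_comm]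
  · intro b _ hbne; simp [Jm, hbne]
  · simp

lemma SE : Sm 𝕏 * Em 𝕏 = AK 𝕏 := by
  ext a b
  rw [Matrix.mul_apply]
  have key : ∀ h, Sm 𝕏 a h * Em 𝕏 h b
      = if 𝕏.X.r h = a ∧ 𝕏.X.r (𝕏.X.bar h) = b then (1:Kk) else 0 := by
    intro h
    simp only [Sm, Em, Matrix.of_apply]
    by_cases h1 : 𝕏.X.r h = a <;> by_cases h2 : 𝕏.X.r (𝕏.X.bar h) = b <;> simp [h1, h2]
  simp only [key]
  rw [Finset.sum_boole]
  simp [AK, LegGraph.adjMat, Matrix.map_apply, Fintype.card_subtype]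

lemma JEm : Jm 𝕏 * Em 𝕏 = Matrix.of fun h v => if 𝕏.X.r h = v then (1:Kk) else 0 := by
  ext h v
  rw [Matrix.mul_apply, Finset.sum_eq_single (𝕏.X.bar h)]
  · simp [Jm, Em, 𝕏.X.bar_bar]
  · intro b _ hbne; simp [Jm, hbne]
  · simp

lemma SJE : Sm 𝕏 * (Jm 𝕏 * Em 𝕏) = QK 𝕏 := by
  rw [JEm]
  ext a b
  rw [Matrix.mul_apply]
  have key : ∀ h, Sm 𝕏 a h * (Matrix.of fun h v => if 𝕏.X.r h = v then (1:Kk) else 0) h b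
      = if 𝕏.X.r h = a ∧ 𝕏.X.r h = b then (1:Kk) else 0 := by
    intro h
    simp only [Sm, Matrix.of_apply]
    by_cases h1 : 𝕏.X.r h = a <;> by_cases h2 : 𝕏.X.r h = b <;> simp [h1, h2]
  simp only [key]
  rw [Finset.sum_boole]
  by_cases hab : a = b
  · subst hab
    simp [QK, LegGraph.valMat, Matrix.map_apply, Fintype.card_subtype, and_self]
  · have hempty : (Finset.univ.filter fun h => 𝕏.X.r h = a ∧ 𝕏.X.r h = b) = ∅ :=
      Finset.filter_eq_empty_iff.mpr fun h _ => by
        rintro ⟨h1, h2⟩; exact hab (h1.symm.trans h2)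
    simp [hempty, QK, LegGraph.valMat, Matrix.map_apply, Matrix.diagonal_apply_ne _ hab]

lemma Wdec : WK 𝕏 = Em 𝕏 * (Cm 𝕏 * Sm 𝕏) - Jm 𝕏 := by
  ext h h'
  rw [Matrix.sub_apply, Matrix.mul_apply]
  have hCS : ∀ v, (Cm 𝕏 * Sm 𝕏) v h' = if 𝕏.X.r h' = v then (𝕏.charge v : Kk) else 0 := by
    intro v
    rw [show (Cm 𝕏 * Sm 𝕏) v h' = (𝕏.charge v : Kk) * Sm 𝕏 v h' from by
      rw [Cm, Matrix.diagonal_mul]]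
    simp only [Sm, Matrix.of_apply, mul_ite, mul_one, mul_zero]
  rw [Finset.sum_eq_single (𝕏.X.r (𝕏.X.bar h))]
  · rw [show Em 𝕏 h (𝕏.X.r (𝕏.X.bar h)) = 1 from by simp [Em], one_mul, hCS]
    simp only [WK, Matrix.map_apply, GraphOfGroups.Wmat, Jm, Matrix.of_apply]
    by_cases hbar : h' = 𝕏.X.bar h
    · have hr : 𝕏.X.r h' = 𝕏.X.r (𝕏.X.bar h) := by rw [hbar]
      simp [hbar, hr]
    · by_cases hr : 𝕏.X.r (𝕏.X.bar h) = 𝕏.X.r h'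
      · simp [hbar, hr]
      · simp only [hbar, if_false, if_neg hbar, if_neg hr,
          if_neg (fun hc : 𝕏.X.r h' = 𝕏.X.r (𝕏.X.bar h) => hr hc.symm)]
        simp
  · intro v _ hv
    rw [show Em 𝕏 h v = 0 from by
      simp only [Em, Matrix.of_apply]; exact if_neg fun hc => hv hc.symm, zero_mul]
  · simp

lemma one_sub_u_sq_ne : (1 : Kk) - uu ^ 2 ≠ 0 := by
  intro h
  have hP : (1 - Polynomial.X ^ 2 : Polynomial ℤ) ≠ 0 := fun hc => by
    simpa using congrArg (Polynomial.eval 0) hc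
  apply hP
  apply IsFractionRing.injective (Polynomial ℤ) Kk
  rw [map_sub, _root_.map_one, map_pow, map_zero]
  exact h

lemma main_det :
    (1 - uu ^ 2) ^ Fintype.card 𝕏.X.V * Matrix.det (1 - uu • WK 𝕏) =
    Matrix.det (1 + uu • Jm 𝕏) *
      Matrix.det ((1 - uu ^ 2) • (1 : Matrix 𝕏.X.V 𝕏.X.V Kk)
        - uu • (Cm 𝕏 * AK 𝕏) + uu ^ 2 • (Cm 𝕏 * QK 𝕏)) := by
  have hne := one_sub_u_sq_ne
  set P : Matrix 𝕏.X.H 𝕏.X.V Kk :=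
    (1 - uu ^ 2)⁻¹ • ((1 - uu • Jm 𝕏) * Em 𝕏) with hP
  have key1 : (1 + uu • Jm 𝕏) * (1 - uu • Jm 𝕏) = (1 - uu ^ 2) • 1 := by
    have hsq : (uu • Jm 𝕏) * (uu • Jm 𝕏) = (uu ^ 2) • (1 : Matrix 𝕏.X.H 𝕏.X.H Kk) := by
      rw [Matrix.smul_mul, Matrix.mul_smul, smul_smul, JJ, ← sq]
    rw [mul_sub, mul_one, add_mul, one_mul, hsq, sub_smul, one_smul]
    abel
  have key2 : (1 + uu • Jm 𝕏) * P = Em 𝕏 := by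
    rw [hP, Matrix.mul_smul, ← Matrix.mul_assoc, key1, Matrix.smul_mul, Matrix.one_mul,
      smul_smul, inv_mul_cancel₀ hne, one_smul]
  have key3 : 1 - uu • WK 𝕏 = (1 + uu • Jm 𝕏) * (1 - (uu • P) * (Cm 𝕏 * Sm 𝕏)) := by
    rw [mul_sub, mul_one, Matrix.smul_mul, Matrix.mul_smul, ← Matrix.mul_assoc, key2, Wdec,
      smul_sub]
    abel
  have hdet1 : Matrix.det (1 - uu • WK 𝕏) =
      Matrix.det (1 + uu • Jm 𝕏) * Matrix.det (1 - (Cm 𝕏 * Sm 𝕏) * (uu • P)) := by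
    rw [key3, Matrix.det_mul]
    congr 1
    rw [sub_eq_add_neg, ← Matrix.neg_mul, Matrix.det_one_add_mul_comm, Matrix.mul_neg,
      ← sub_eq_add_neg]
  have key4 : (Cm 𝕏 * Sm 𝕏) * (uu • P) =
      ((1 - uu ^ 2)⁻¹ * uu) • (Cm 𝕏 * AK 𝕏) - ((1 - uu ^ 2)⁻¹ * uu ^ 2) • (Cm 𝕏 * QK 𝕏) := by
    rw [hP, Matrix.mul_smul, Matrix.mul_smul, smul_smul]
    rw [show (Cm 𝕏 * Sm 𝕏) * ((1 - uu • Jm 𝕏) * Em 𝕏)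
        = Cm 𝕏 * (Sm 𝕏 * Em 𝕏) - uu • (Cm 𝕏 * (Sm 𝕏 * (Jm 𝕏 * Em 𝕏))) from by
      rw [Matrix.sub_mul, Matrix.one_mul, Matrix.smul_mul, Matrix.mul_sub, Matrix.mul_smul]
      simp only [Matrix.mul_assoc]]
    rw [SE, SJE, smul_sub, smul_smul]
    congr 1
    · rw [mul_comm]
    · rw [mul_comm uu ((1 - uu ^ 2)⁻¹), mul_assoc, ← sq]
  have key5 : (1 - uu ^ 2) • ((1 : Matrix 𝕏.X.V 𝕏.X.V Kk) - (Cm 𝕏 * Sm 𝕏) * (uu • P)) =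
      (1 - uu ^ 2) • (1 : Matrix 𝕏.X.V 𝕏.X.V Kk)
        - uu • (Cm 𝕏 * AK 𝕏) + uu ^ 2 • (Cm 𝕏 * QK 𝕏) := by
    rw [key4, smul_sub, smul_sub, smul_smul, smul_smul, ← mul_assoc, ← mul_assoc,
      mul_inv_cancel₀ hne, one_mul, one_mul]
    abel
  calc (1 - uu ^ 2) ^ Fintype.card 𝕏.X.V * Matrix.det (1 - uu • WK 𝕏)
      = Matrix.det (1 + uu • Jm 𝕏) *
          ((1 - uu ^ 2) ^ Fintype.card 𝕏.X.V *
            Matrix.det (1 - (Cm 𝕏 * Sm 𝕏) * (uu • P))) := by rw [hdet1]; ring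
    _ = Matrix.det (1 + uu • Jm 𝕏) *
          Matrix.det ((1 - uu ^ 2) • ((1 : Matrix 𝕏.X.V 𝕏.X.V Kk)
            - (Cm 𝕏 * Sm 𝕏) * (uu • P))) := by rw [Matrix.det_smul]
    _ = _ := by rw [key5]

lemma chargeMap : 𝕏.chargeMat.map (Int.cast : ℤ → Kk) = Cm 𝕏 := by
  rw [GraphOfGroups.chargeMat, Matrix.diagonal_map (by simp)]
  simp [Cm]

lemma CmAK : Cm 𝕏 * AK 𝕏 = (𝕏.chargeMat * 𝕏.X.adjMat).map Int.cast := by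
  have h := Matrix.map_mul (L := 𝕏.chargeMat) (M := 𝕏.X.adjMat) (f := Int.castRingHom Kk)
  rw [Int.coe_castRingHom] at h
  rw [h, chargeMap]
  rfl

lemma CmQK : Cm 𝕏 * QK 𝕏 = (𝕏.chargeMat * 𝕏.X.valMat).map Int.cast := by
  have h := Matrix.map_mul (L := 𝕏.chargeMat) (M := 𝕏.X.valMat) (f := Int.castRingHom Kk)
  rw [Int.coe_castRingHom] at h
  rw [h, chargeMap]
  rfl

lemma algC (z : ℤ) : algebraMap (Polynomial ℤ) Kk (Polynomial.C z) = (z : Kk) := by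
  rw [eq_intCast (Polynomial.C : ℤ →+* Polynomial ℤ) z, map_intCast]

lemma mapW :
    (1 - (X : Polynomial ℤ) • (𝕏.Wmat.map Polynomial.C)).map
        (⇑(algebraMap (Polynomial ℤ) Kk)) =
      1 - uu • WK 𝕏 := by
  ext h h'
  simp only [Matrix.map_apply, Matrix.sub_apply, Matrix.smul_apply, Matrix.one_apply,
    smul_eq_mul, map_sub, apply_ite (⇑(algebraMap (Polynomial ℤ) Kk)),
    _root_.map_one, map_zero, _root_.map_mul, WK, uu, algC]

lemma mapB :
    ((1 : Matrix 𝕏.X.V 𝕏.X.V (Polynomial ℤ)) -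
        (X : Polynomial ℤ) • ((𝕏.chargeMat * 𝕏.X.adjMat).map Polynomial.C) +
      ((X : Polynomial ℤ) ^ 2) • (((𝕏.chargeMat * 𝕏.X.valMat).map Polynomial.C) - 1)).map
        (⇑(algebraMap (Polynomial ℤ) Kk)) =
    (1 - uu ^ 2) • (1 : Matrix 𝕏.X.V 𝕏.X.V Kk) - uu • (Cm 𝕏 * AK 𝕏)
      + uu ^ 2 • (Cm 𝕏 * QK 𝕏) := by
  rw [CmAK, CmQK]
  ext a b
  simp only [Matrix.map_apply, Matrix.add_apply, Matrix.sub_apply, Matrix.smul_apply,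
    Matrix.one_apply, smul_eq_mul, map_add, map_sub, map_pow,
    apply_ite (⇑(algebraMap (Polynomial ℤ) Kk)), _root_.map_one, map_zero, _root_.map_mul,
    algC, uu]
  ring

lemma numLegs_eq : 𝕏.X.numLegs = Fintype.card (gogLeg 𝕏.X.bar) := rfl

lemma numEdges_eq : 𝕏.X.numEdges = Fintype.card (gogPos 𝕏.X.bar) := by
  have hc := gog_card 𝕏.X.bar 𝕏.X.bar_bar
  have hl : 𝕏.X.numLegs = Fintype.card (gogLeg 𝕏.X.bar) := rfl
  unfold LegGraph.numEdges
  rw [hl, hc]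
  omega

end
end GogProof


/-- three-term determinant formula for a finite edge-trivial graph of
groups `𝕏` with `n` vertices, `m` edges and `l` legs:
`ζ(u,𝕏)⁻¹ = (1-u²)^(b₁(X)-1) (1+u)^l det(I_n - CAu + (CQ-I_n)u²)`, where
`b₁(X) = m - n + 1` and `ζ(u,𝕏)⁻¹ = det(I_k - Wu)` by the two-term formula. To avoid
the possibly negative exponent `b₁ - 1 = m - n`, both sides are multiplied by
`(1-u²)^n`. -/
theorem gog_three_term (𝕏 : GraphOfGroups) :
    (1 - X ^ 2) ^ (Fintype.card 𝕏.X.V) *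
      Matrix.det (1 - (X : Polynomial ℤ) • (𝕏.Wmat.map Polynomial.C)) =
    (1 - X ^ 2) ^ 𝕏.X.numEdges * (1 + X) ^ 𝕏.X.numLegs *
      Matrix.det
        (1 - (X : Polynomial ℤ) • ((𝕏.chargeMat * 𝕏.X.adjMat).map Polynomial.C) +
          ((X : Polynomial ℤ) ^ 2) •
            (((𝕏.chargeMat * 𝕏.X.valMat).map Polynomial.C) - 1)) := by

  apply IsFractionRing.injective (Polynomial ℤ) GogProof.Kk
  simp only [_root_.map_mul, map_pow, map_sub, map_add, _root_.map_one]
  rw [RingHom.map_det, RingHom.map_det, RingHom.mapMatrix_apply, RingHom.mapMatrix_apply]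
  rw [show algebraMap (Polynomial ℤ) GogProof.Kk X = GogProof.uu from rfl]
  rw [GogProof.mapW 𝕏, GogProof.mapB 𝕏, GogProof.main_det 𝕏]
  rw [show GogProof.Jm 𝕏 = gogJ 𝕏.X.bar from rfl,
    gog_det_J 𝕏.X.bar 𝕏.X.bar_bar GogProof.uu,
    GogProof.numLegs_eq 𝕏, GogProof.numEdges_eq 𝕏]
  ring
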